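/- There exists a decomposition of the complete tripartite graph K_{4,4,4} with parts {1,2,3,4}, {5,6,7,8}, {9,10,11,12} into 7 parallel classes: 4 perfect matchings and 3 classes each consisting of 4 vertex-disjoint paths P_3 covering all 12 vertices. -/

import Mathlib

/-- The edges of a path given by the list of its vertices in order. -/
def pathEdges {V : Type*} [DecidableEq V] (l : List V) : Finset (Sym2 V) :=
  ((l.zip l.tail).map Sym2.mk.uncurry).toFinset

/-- A parallel class of paths on `k` vertices in a graph `G`: a set of lists, each
a path on `k` vertices of `G`, which are vertex-disjoint and cover every vertex. -/
def IsPathClass {V : Type*} (G : SimpleGraph V) (k : ℕ) (C : Finset (List V)) : Prop :=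
  (∀ l ∈ C, l.length = k ∧ l.Nodup ∧ l.Chain' G.Adj) ∧
  ∀ x : V, ∃! l : List V, l ∈ C ∧ x ∈ l

/-- All edges used by a class of paths. -/
def classEdges {V : Type*} [DecidableEq V] (C : Finset (List V)) : Finset (Sym2 V) :=
  C.biUnion pathEdges

/-- A uniformly resolvable `(P₂,P₃,P₄)`-decomposition of `G` into `r` perfect matchings
(parallel classes of `P₂`), `s` parallel classes of `P₃` and `t` parallel classes of `P₄`:
pairwise edge-disjoint classes whose edges together are exactly the edges of `G`. -/
def IsURD {V : Type*} [DecidableEq V] (G : SimpleGraph V) (r s t : ℕ) : Prop :=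
  ∃ F : Fin r ⊕ Fin s ⊕ Fin t → Finset (List V),
    (∀ i, IsPathClass G (Sum.elim (fun _ => 2) (Sum.elim (fun _ => 3) (fun _ => 4)) i) (F i)) ∧
    (∀ i j, i ≠ j → Disjoint (classEdges (F i)) (classEdges (F j))) ∧
    (∀ e, e ∈ G.edgeSet ↔ ∃ i, e ∈ classEdges (F i))

/-- The complete tripartite graph `K_{4,4,4}`: vertices `(part, i)` with `part : Fin 3`,
adjacent iff in different parts. -/
def K444 : SimpleGraph (Fin 3 × Fin 4) := SimpleGraph.comap Prod.fst ⊤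

instance : DecidableRel K444.Adj := fun a b =>
  inferInstanceAs (Decidable (a.1 ≠ b.1))

def vv : ℕ → Fin 3 × Fin 4
  | 1 => (0,0) | 2 => (0,1) | 3 => (0,2) | 4 => (0,3)
  | 5 => (1,0) | 6 => (1,1) | 7 => (1,2) | 8 => (1,3)
  | 9 => (2,0) | 10 => (2,1) | 11 => (2,2) | _ => (2,3)

def FF : Fin 4 ⊕ Fin 3 ⊕ Fin 0 → Finset (List (Fin 3 × Fin 4)) :=
  Sum.elim
    ![{[vv 1,vv 6],[vv 2,vv 5],[vv 3,vv 10],[vv 4,vv 9],[vv 7,vv 12],[vv 8,vv 11]},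
      {[vv 1,vv 5],[vv 2,vv 6],[vv 3,vv 9],[vv 4,vv 10],[vv 7,vv 11],[vv 8,vv 12]},
      {[vv 1,vv 9],[vv 2,vv 10],[vv 3,vv 7],[vv 4,vv 8],[vv 6,vv 12],[vv 5,vv 11]},
      {[vv 1,vv 10],[vv 2,vv 9],[vv 3,vv 8],[vv 4,vv 7],[vv 5,vv 12],[vv 6,vv 11]}]
    (Sum.elim
      ![{[vv 8,vv 1,vv 11],[vv 7,vv 2,vv 12],[vv 4,vv 5,vv 9],[vv 3,vv 6,vv 10]},
        {[vv 11,vv 3,vv 5],[vv 12,vv 4,vv 6],[vv 1,vv 7,vv 9],[vv 2,vv 8,vv 10]},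
        {[vv 6,vv 9,vv 8],[vv 5,vv 10,vv 7],[vv 2,vv 11,vv 4],[vv 1,vv 12,vv 3]}]
      Fin.elim0)

lemma euiff {V : Type*} (C : Finset (List V)) (x : V) :
    (∃! l : List V, l ∈ C ∧ x ∈ l) ↔ ∃ l ∈ C, x ∈ l ∧ ∀ l' ∈ C, x ∈ l' → l' = l := by
  constructor
  · rintro ⟨l, ⟨hC, hx⟩, hu⟩
    exact ⟨l, hC, hx, fun l' h1 h2 => hu l' ⟨h1, h2⟩⟩
  · rintro ⟨l, hC, hx, hu⟩
    exact ⟨l, ⟨hC, hx⟩, fun l' ⟨h1, h2⟩ => hu l' h1 h2⟩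

/-- `K_{4,4,4}` admits a uniformly resolvable decomposition into 7 parallel classes:
4 perfect matchings and 3 classes each consisting of 4 vertex-disjoint `P₃`'s. -/
theorem stmt11 : IsURD K444 4 3 0 := by
  refine ⟨FF, fun i => ⟨?_, fun x => (euiff _ _).mpr ?_⟩, ?_, ?_⟩
  · simp only [List.Chain']
    revert i; decide +kernel
  · revert i x; decide +kernel
  · decide +kernel
  · intro e
    induction e using Sym2.ind with
    | _ a b => revert a b; decide +kernel
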